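/- Let (Ω, 𝔄, ℙ) be a probability space, λ ∈ (0,1), n₀ ≥ 1, and let P₁,…,P_{n₀} : Ω → [0,1] be mutually independent random variables with ℙ(P_k > λ) ≥ 1 − λ for every k. Then E[ 1 / (1 + card{ k ∈ {1,…,n₀} : P_k(ω) > λ }) ] ≤ 1 / ((n₀ + 1)(1 − λ)). In particular, if B is a binomial random variable with n trials and success probability q ∈ (0,1], then E[1/(1+B)] ≤ 1/((n+1)q). -/

import Mathlib

open MeasureTheory ProbabilityTheory Finset

section Aux

lemma storey_pascal_sum (p : ℝ) (m : ℕ) (T : ℕ → ℝ) :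
    ∑ k ∈ range (m+2), ((m+1).choose k : ℝ) * p^k * (1-p)^(m+1-k) * T k
    = (1-p) * ∑ k ∈ range (m+1), (m.choose k : ℝ) * p^k * (1-p)^(m-k) * T k
      + p * ∑ k ∈ range (m+1), (m.choose k : ℝ) * p^k * (1-p)^(m-k) * T (k+1) := by
  have key : ∑ k ∈ range (m+2), ((m+1).choose k : ℝ) * p^k * (1-p)^(m+1-k) * T k
      = (∑ k ∈ range (m+1), p * ((m.choose k : ℝ) * p^k * (1-p)^(m-k) * T (k+1)))
        + ∑ j ∈ range (m+2), (m.choose j : ℝ) * p^j * (1-p)^(m+1-j) * T j := by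
    rw [Finset.sum_range_succ' (fun k => ((m+1).choose k : ℝ) * p^k * (1-p)^(m+1-k) * T k),
        Finset.sum_range_succ' (fun j => (m.choose j : ℝ) * p^j * (1-p)^(m+1-j) * T j)]
    have h : ∀ k ∈ range (m+1),
        ((m+1).choose (k+1) : ℝ) * p^(k+1) * (1-p)^(m+1-(k+1)) * T (k+1)
        = p * ((m.choose k : ℝ) * p^k * (1-p)^(m-k) * T (k+1))
          + (m.choose (k+1) : ℝ) * p^(k+1) * (1-p)^(m+1-(k+1)) * T (k+1) := by
      intro k hk
      have hc : ((m+1).choose (k+1) : ℝ) = (m.choose k : ℝ) + m.choose (k+1) := by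
        rw [Nat.choose_succ_succ]; push_cast; ring
      have hsub : m+1-(k+1) = m - k := by omega
      rw [hc, hsub]; ring
    rw [Finset.sum_congr rfl h, Finset.sum_add_distrib]
    simp [Nat.choose_zero_right]
    ring
  rw [key]
  have h0 : ∑ j ∈ range (m+2), (m.choose j : ℝ) * p^j * (1-p)^(m+1-j) * T j
      = (1-p) * ∑ k ∈ range (m+1), (m.choose k : ℝ) * p^k * (1-p)^(m-k) * T k := by
    rw [Finset.sum_range_succ]
    simp only [Nat.choose_succ_self, Nat.cast_zero, zero_mul, mul_zero, add_zero]
    rw [Finset.mul_sum]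
    refine Finset.sum_congr rfl fun k hk => ?_
    have hk' : k ≤ m := Nat.lt_succ_iff.mp (mem_range.mp hk)
    have : m+1-k = (m-k)+1 := by omega
    rw [this]; ring
  rw [h0, ← Finset.mul_sum]; ring

lemma storey_binom_bound (n : ℕ) (q : ℝ) (hq : 0 < q) (hq1 : q ≤ 1) :
    ∑ k ∈ Finset.range (n + 1),
      (n.choose k : ℝ) * q ^ k * (1 - q) ^ (n - k) * (1 / (1 + (k : ℝ)))
      ≤ 1 / (((n : ℝ) + 1) * q) := by
  have hc : 0 < ((n : ℝ) + 1) * q := by positivity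
  rw [le_div_iff₀ hc]
  have h1 : ∑ k ∈ Finset.range (n + 1),
      (n.choose k : ℝ) * q ^ k * (1 - q) ^ (n - k) * (1 / (1 + (k : ℝ))) * (((n : ℝ) + 1) * q)
      = ∑ k ∈ Finset.range (n + 1),
        ((n+1).choose (k+1) : ℝ) * q ^ (k+1) * (1 - q) ^ (n+1-(k+1)) := by
    refine Finset.sum_congr rfl fun k hk => ?_
    have hmul : ((n : ℝ) + 1) * (n.choose k : ℝ) = ((n+1).choose (k+1) : ℝ) * ((k:ℝ)+1) := by
      have := Nat.add_one_mul_choose_eq n k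
      have := congrArg (Nat.cast (R := ℝ)) this
      push_cast at this
      linarith [this]
    have hk1 : (1 : ℝ) + k ≠ 0 := by positivity
    have hsub : n+1-(k+1) = n - k := by omega
    rw [hsub]
    field_simp
    linear_combination (q^k*q*(1-q)^(n-k)) * hmul
  rw [Finset.sum_mul, h1]
  have h2 : ∑ j ∈ Finset.range (n + 2), ((n+1).choose j : ℝ) * q ^ j * (1 - q) ^ (n+1-j) = 1 := by
    have hpow := add_pow q (1-q) (n+1)
    simp only [add_sub_cancel, one_pow] at hpow
    calc ∑ j ∈ Finset.range (n+2), ((n+1).choose j : ℝ) * q^j * (1-q)^(n+1-j)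
        = ∑ j ∈ Finset.range (n+1+1), q^j * (1-q)^(n+1-j) * ((n+1).choose j : ℝ) :=
          Finset.sum_congr rfl fun k _ => by ring
      _ = 1 := hpow.symm
  calc ∑ k ∈ Finset.range (n + 1), ((n+1).choose (k+1) : ℝ) * q ^ (k+1) * (1 - q) ^ (n+1-(k+1))
      ≤ ∑ j ∈ Finset.range (n + 2), ((n+1).choose j : ℝ) * q ^ j * (1 - q) ^ (n+1-j) := by
        rw [Finset.sum_range_succ' (fun j => ((n+1).choose j : ℝ) * q ^ j * (1 - q) ^ (n+1-j))]
        have : 0 ≤ ((n+1).choose 0 : ℝ) * q ^ 0 * (1 - q) ^ (n+1-0) :=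
          mul_nonneg (by positivity) (pow_nonneg (by linarith) _)
        linarith
    _ = 1 := h2


lemma storey_aux_integrable {Ω : Type*} [MeasurableSpace Ω] (μ : Measure Ω) [IsProbabilityMeasure μ]
    (N : Ω → ℝ) (hN : Measurable N) (hN0 : ∀ ω, 0 ≤ N ω) (d : ℝ) (hd : 1 ≤ d) :
    Integrable (fun ω => 1 / (d + N ω)) μ := by
  have hmeas : Measurable fun ω => 1 / (d + N ω) := by
    exact measurable_const.div (hN.const_add d)
  refine ⟨hmeas.aestronglyMeasurable, ?_⟩
  apply HasFiniteIntegral.of_bounded (C := 1)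
  filter_upwards with ω
  have h1 : (1:ℝ) ≤ d + N ω := by linarith [hN0 ω]
  rw [Real.norm_eq_abs, abs_of_nonneg (by positivity)]
  calc 1/(d+N ω) ≤ 1/1 := one_div_le_one_div_of_le one_pos h1
  _ = 1 := by norm_num

end Aux


/-- The key bound for Storey-type null-proportion estimators: if `P₁, …, P_{n₀}` are
mutually independent with `ℙ(P_k > λ) ≥ 1 - λ`, then
`E[1/(1 + #{k : P_k > λ})] ≤ 1/((n₀+1)(1-λ))`; in particular, for a binomial random
variable `B` with `n` trials and success probability `q ∈ (0,1]`,
`E[1/(1+B)] ≤ 1/((n+1)q)`. -/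
theorem storey_leave_one_out_bound
    {Ω : Type*} [MeasurableSpace Ω] (μ : Measure Ω) [IsProbabilityMeasure μ]
    (lam : ℝ) (hlam : lam ∈ Set.Ioo (0 : ℝ) 1)
    (n₀ : ℕ) (hn₀ : 1 ≤ n₀)
    (P : Fin n₀ → Ω → ℝ)
    (hPmeas : ∀ k, Measurable (P k))
    (hPindep : iIndepFun P μ)
    (hPtail : ∀ k, ENNReal.ofReal (1 - lam) ≤ μ {ω | lam < P k ω}) :
    (∫ ω, 1 / (1 + ((univ.filter (fun k : Fin n₀ => lam < P k ω)).card : ℝ)) ∂μ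
      ≤ 1 / (((n₀ : ℝ) + 1) * (1 - lam))) ∧
    (∀ n : ℕ, ∀ q : ℝ, 0 < q → q ≤ 1 →
      ∑ k ∈ Finset.range (n + 1),
        (n.choose k : ℝ) * q ^ k * (1 - q) ^ (n - k) * (1 / (1 + (k : ℝ)))
        ≤ 1 / (((n : ℝ) + 1) * q)) := by
  classical
  obtain ⟨hlam0, hlam1⟩ := hlam
  set p : ℝ := 1 - lam with hpdef
  have hp0 : 0 < p := by rw [hpdef]; linarith
  have hp1 : p ≤ 1 := by rw [hpdef]; linarith
  set X : Fin n₀ → Ω → ℝ := fun k ω => if lam < P k ω then 1 else 0 with hXdef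
  have hSmeas : ∀ k, MeasurableSet {ω | lam < P k ω} := fun k =>
    measurableSet_lt measurable_const (hPmeas k)
  have hXmeas : ∀ k, Measurable (X k) := fun k =>
    Measurable.ite (hSmeas k) measurable_const measurable_const
  have hX01 : ∀ k ω, X k ω = 0 ∨ X k ω = 1 := by
    intro k ω; by_cases h : lam < P k ω <;> simp [hXdef, h]
  have hX0 : ∀ k ω, 0 ≤ X k ω := by
    intro k ω; rcases hX01 k ω with h | h <;> rw [h] <;> norm_num
  have hXindep : iIndepFun X μ := by
    have hgm : Measurable (fun x : ℝ => if lam < x then (1:ℝ) else 0) :=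
      Measurable.ite measurableSet_Ioi measurable_const measurable_const
    exact hPindep.comp (fun _ => fun x : ℝ => if lam < x then (1:ℝ) else 0) (fun _ => hgm)
  have key : ∀ s : Finset (Fin n₀), ∀ c : ℕ,
      ∫ ω, 1 / (1 + (c:ℝ) + ∑ k ∈ s, X k ω) ∂μ
        ≤ ∑ k ∈ Finset.range (s.card + 1),
            (s.card.choose k : ℝ) * p^k * (1-p)^(s.card - k) * (1 / (1 + (c:ℝ) + (k:ℝ))) := by
    intro s
    induction s using Finset.induction_on with
    | empty => intro c; simp
    | @insert j s hj ih =>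
      intro c
      have hcard : (insert j s).card = s.card + 1 := Finset.card_insert_of_notMem hj
      set N : Ω → ℝ := fun ω => ∑ k ∈ s, X k ω with hNdef
      have hNmeas : Measurable N := Finset.measurable_sum s (fun k _ => hXmeas k)
      have hN0 : ∀ ω, 0 ≤ N ω := fun ω => Finset.sum_nonneg fun k _ => hX0 k ω
      -- pointwise decomposition
      have hpt : ∀ ω, 1 / (1 + (c:ℝ) + ∑ k ∈ insert j s, X k ω)
          = 1 / (1 + (c:ℝ) + N ω) - X j ω * (1 / (1 + (c:ℝ) + N ω) - 1 / (2 + (c:ℝ) + N ω)) := by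
        intro ω
        rw [Finset.sum_insert hj]
        change 1 / (1 + (c:ℝ) + (X j ω + N ω)) = _
        have hd1 : (0:ℝ) < 1 + (c:ℝ) + N ω := by positivity
        have hd2 : (0:ℝ) < 2 + (c:ℝ) + N ω := by positivity
        rcases hX01 j ω with h | h <;> rw [h]
        · ring_nf
        · have h2 : (1:ℝ) + (c:ℝ) + (1 + N ω) = 2 + (c:ℝ) + N ω := by ring
          rw [h2]; ring
      -- integrability
      have int1 : Integrable (fun ω => 1 / (1 + (c:ℝ) + N ω)) μ := by
        have := storey_aux_integrable μ N hNmeas hN0 (1 + (c:ℝ)) (by norm_num)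
        simpa [add_assoc] using this
      have int2 : Integrable (fun ω => 1 / (2 + (c:ℝ) + N ω)) μ := by
        have := storey_aux_integrable μ N hNmeas hN0 (2 + (c:ℝ))
          (by linarith [Nat.cast_nonneg (α := ℝ) c])
        simpa [add_assoc] using this
      have intg : Integrable (fun ω => 1 / (1 + (c:ℝ) + N ω) - 1 / (2 + (c:ℝ) + N ω)) μ :=
        int1.sub int2
      have intXg : Integrable
          (fun ω => X j ω * (1 / (1 + (c:ℝ) + N ω) - 1 / (2 + (c:ℝ) + N ω))) μ := by
        have hb : ∀ ω, ‖X j ω * (1 / (1 + (c:ℝ) + N ω) - 1 / (2 + (c:ℝ) + N ω))‖ ≤ 1 * (1 + 1) := by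
          intro ω
          rw [norm_mul]
          gcongr
          · rcases hX01 j ω with h | h <;> simp [h]
          · have hd1 : (0:ℝ) < 1 + (c:ℝ) + N ω := by positivity
            have hd2 : (0:ℝ) < 2 + (c:ℝ) + N ω := by positivity
            have h1 : 1 / (1 + (c:ℝ) + N ω) ≤ 1 :=
              le_trans (one_div_le_one_div_of_le one_pos (by linarith [hN0 ω])) (by norm_num)
            have h2 : 1 / (2 + (c:ℝ) + N ω) ≤ 1 :=
              le_trans (one_div_le_one_div_of_le one_pos (by linarith [hN0 ω])) (by norm_num)
            have h3 : 0 ≤ 1 / (1 + (c:ℝ) + N ω) := by positivity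
            have h4 : 0 ≤ 1 / (2 + (c:ℝ) + N ω) := by positivity
            rw [Real.norm_eq_abs, abs_le]
            constructor <;> linarith
        have hgNmeas : Measurable (fun ω => 1 / (1 + (c:ℝ) + N ω) - 1 / (2 + (c:ℝ) + N ω)) := by
          have h1 : Measurable fun ω => 1 / (1 + (c:ℝ) + N ω) := by
            exact measurable_const.div (hNmeas.const_add (1 + (c:ℝ)))
          have h2 : Measurable fun ω => 1 / (2 + (c:ℝ) + N ω) := by
            exact measurable_const.div (hNmeas.const_add (2 + (c:ℝ)))
          exact h1.sub h2
        exact ⟨((hXmeas j).mul hgNmeas).aestronglyMeasurable,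
          HasFiniteIntegral.of_bounded (ae_of_all μ hb)⟩
      -- independence
      have hindep2 : IndepFun (X j)
          (fun ω => 1 / (1 + (c:ℝ) + N ω) - 1 / (2 + (c:ℝ) + N ω)) μ := by
        have hbase : IndepFun (∑ k ∈ s, X k) (X j) μ :=
          hXindep.indepFun_finsetSum_of_notMem hXmeas hj
        have hg : Measurable fun t : ℝ => 1 / (1 + (c:ℝ) + t) - 1 / (2 + (c:ℝ) + t) := by
          have h1 : Measurable fun t : ℝ => 1 / (1 + (c:ℝ) + t) := by
            exact measurable_const.div (measurable_id.const_add (1 + (c:ℝ)))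
          have h2 : Measurable fun t : ℝ => 1 / (2 + (c:ℝ) + t) := by
            exact measurable_const.div (measurable_id.const_add (2 + (c:ℝ)))
          exact h1.sub h2
        have := hbase.symm.comp measurable_id hg
        have heq : ((fun t : ℝ => 1 / (1 + (c:ℝ) + t) - 1 / (2 + (c:ℝ) + t)) ∘ (∑ k ∈ s, X k))
            = fun ω => 1 / (1 + (c:ℝ) + N ω) - 1 / (2 + (c:ℝ) + N ω) := by
          funext ω; simp [Function.comp, hNdef, Finset.sum_apply]
        rw [heq] at this
        exact this
      -- integral of the product
      have hmul : ∫ ω, X j ω * (1 / (1 + (c:ℝ) + N ω) - 1 / (2 + (c:ℝ) + N ω)) ∂μ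
          = (∫ ω, X j ω ∂μ) *
            ∫ ω, (1 / (1 + (c:ℝ) + N ω) - 1 / (2 + (c:ℝ) + N ω)) ∂μ :=
        hindep2.integral_mul_eq_mul_integral (hXmeas j).aestronglyMeasurable intg.1
      -- value of ∫ X j
      have hXj_int : ∫ ω, X j ω ∂μ = (μ {ω | lam < P j ω}).toReal := by
        have heq : (fun ω => X j ω)
            = Set.indicator {ω | lam < P j ω} (fun _ => (1:ℝ)) := by
          funext ω; simp [hXdef, Set.indicator_apply, Set.mem_setOf_eq]
        rw [heq]
        exact integral_indicator_one (hSmeas j)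
      have hpj : p ≤ ∫ ω, X j ω ∂μ := by
        rw [hXj_int]
        have hne : μ {ω | lam < P j ω} ≠ ⊤ := measure_ne_top μ _
        exact (ENNReal.ofReal_le_iff_le_toReal hne).mp (hPtail j)
      set A := ∫ ω, 1 / (1 + (c:ℝ) + N ω) ∂μ with hA
      set D := ∫ ω, 1 / (2 + (c:ℝ) + N ω) ∂μ with hD
      set pj := ∫ ω, X j ω ∂μ with hpjdef
      have hgint : ∫ ω, (1 / (1 + (c:ℝ) + N ω) - 1 / (2 + (c:ℝ) + N ω)) ∂μ = A - D :=
        integral_sub int1 int2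
      have hADnn : 0 ≤ A - D := by
        rw [← hgint]
        refine integral_nonneg fun ω => ?_
        have hd1 : (0:ℝ) < 1 + (c:ℝ) + N ω := by positivity
        have h2 : 1 + (c:ℝ) + N ω ≤ 2 + (c:ℝ) + N ω := by linarith
        have := one_div_le_one_div_of_le hd1 h2
        simp only [Pi.sub_apply, Pi.zero_apply]
        linarith
      have hstep : ∫ ω, 1 / (1 + (c:ℝ) + ∑ k ∈ insert j s, X k ω) ∂μ = A - pj * (A - D) := by
        rw [integral_congr_ae (ae_of_all μ hpt), integral_sub int1 intXg, hmul, hgint]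
      have hmono : A - pj * (A - D) ≤ (1 - p) * A + p * D := by
        have h1 : p * (A - D) ≤ pj * (A - D) := mul_le_mul_of_nonneg_right hpj hADnn
        have h2 : A - p * (A - D) = (1 - p) * A + p * D := by ring
        linarith
      have hih1 : A ≤ ∑ k ∈ Finset.range (s.card + 1),
          ((s.card).choose k : ℝ) * p^k * (1-p)^(s.card - k) * (1 / (1 + (c:ℝ) + (k:ℝ))) := ih c
      have hih2 : D ≤ ∑ k ∈ Finset.range (s.card + 1),
          ((s.card).choose k : ℝ) * p^k * (1-p)^(s.card - k)
            * (1 / (1 + (c:ℝ) + ((k+1 : ℕ):ℝ))) := by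
        have h := ih (c+1)
        have hl : D = ∫ ω, 1 / (1 + ((c+1:ℕ):ℝ) + ∑ k ∈ s, X k ω) ∂μ := by
          rw [hD]
          refine integral_congr_ae (ae_of_all μ fun ω => ?_)
          simp only [hNdef]
          push_cast
          ring_nf
        rw [hl]
        refine h.trans (le_of_eq (Finset.sum_congr rfl fun k hk => ?_))
        push_cast
        ring_nf
      have hpascal := storey_pascal_sum p s.card (fun k => 1 / (1 + (c:ℝ) + (k:ℝ)))
      calc ∫ ω, 1 / (1 + (c:ℝ) + ∑ k ∈ insert j s, X k ω) ∂μ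
          = A - pj * (A - D) := hstep
        _ ≤ (1 - p) * A + p * D := hmono
        _ ≤ (1-p) * (∑ k ∈ Finset.range (s.card + 1),
              ((s.card).choose k : ℝ) * p^k * (1-p)^(s.card - k) * (1 / (1 + (c:ℝ) + (k:ℝ))))
            + p * (∑ k ∈ Finset.range (s.card + 1),
              ((s.card).choose k : ℝ) * p^k * (1-p)^(s.card - k)
                * (1 / (1 + (c:ℝ) + ((k+1 : ℕ):ℝ)))) := by
            exact add_le_add (mul_le_mul_of_nonneg_left hih1 (by linarith))
              (mul_le_mul_of_nonneg_left hih2 (le_of_lt hp0))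
        _ = ∑ k ∈ Finset.range ((insert j s).card + 1),
              (((insert j s).card).choose k : ℝ) * p^k * (1-p)^((insert j s).card - k)
                * (1 / (1 + (c:ℝ) + (k:ℝ))) := by
            rw [hcard]
            exact hpascal.symm
  refine ⟨?_, fun n q hq hq1 => storey_binom_bound n q hq hq1⟩
  have hkey := key Finset.univ 0
  have hlhs : ∀ ω, (1:ℝ) / (1 + ((univ.filter (fun k : Fin n₀ => lam < P k ω)).card : ℝ))
      = 1 / (1 + ((0:ℕ):ℝ) + ∑ k ∈ univ, X k ω) := by
    intro ω
    have hc : (((univ.filter (fun k : Fin n₀ => lam < P k ω)).card : ℕ) : ℝ)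
        = ∑ k ∈ univ, X k ω := by
      rw [Finset.card_filter]
      push_cast
      exact Finset.sum_congr rfl fun k _ => by by_cases h : lam < P k ω <;> simp [hXdef, h]
    rw [hc]
    norm_num
  have hrhs : ∑ k ∈ Finset.range ((Finset.univ : Finset (Fin n₀)).card + 1),
        (((Finset.univ : Finset (Fin n₀)).card).choose k : ℝ) * p^k * (1-p)^((Finset.univ : Finset (Fin n₀)).card - k)
          * (1 / (1 + ((0:ℕ):ℝ) + (k:ℝ)))
      = ∑ k ∈ Finset.range (n₀ + 1),
        (n₀.choose k : ℝ) * p^k * (1-p)^(n₀ - k) * (1 / (1 + (k:ℝ))) := by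
    rw [Finset.card_univ, Fintype.card_fin]
    exact Finset.sum_congr rfl fun k _ => by norm_num
  calc ∫ ω, 1 / (1 + ((univ.filter (fun k : Fin n₀ => lam < P k ω)).card : ℝ)) ∂μ
      = ∫ ω, 1 / (1 + ((0:ℕ):ℝ) + ∑ k ∈ univ, X k ω) ∂μ :=
        integral_congr_ae (ae_of_all μ hlhs)
    _ ≤ ∑ k ∈ Finset.range ((Finset.univ : Finset (Fin n₀)).card + 1),
          (((Finset.univ : Finset (Fin n₀)).card).choose k : ℝ) * p^k * (1-p)^((Finset.univ : Finset (Fin n₀)).card - k)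
            * (1 / (1 + ((0:ℕ):ℝ) + (k:ℝ))) := hkey
    _ = ∑ k ∈ Finset.range (n₀ + 1),
          (n₀.choose k : ℝ) * p^k * (1-p)^(n₀ - k) * (1 / (1 + (k:ℝ))) := hrhs
    _ ≤ 1 / (((n₀:ℝ) + 1) * p) := storey_binom_bound n₀ p hp0 hp1
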